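/- Let h = g_- ⊂ so(1,n+1) (the abelian subalgebra isomorphic to ℝ^n in the parabolic) and let R ∈ Λ²V* ⊗ h satisfy h·R = 0 under the natural action. Then e_- ⌟ R = 0, i.e. R(e_-, v) = 0 for all v ∈ V = ℝ^{1,n+1}. -/

import Mathlib

open scoped BigOperators

/-- Minkowski space `ℝ^{1,n+1}` in a Witt basis, coordinates indexed by `Fin (n+2)`:
index `0` is `e₋`, indices `1,…,n` are the Euclidean directions, index `n+1` is `e₊`. -/
abbrev Vm (n : ℕ) : Type := Fin (n + 2) → ℝ

def lastIx (n : ℕ) : Fin (n + 2) := Fin.last (n + 1)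

def midIx (n : ℕ) (i : Fin n) : Fin (n + 2) := ⟨i.1 + 1, by omega⟩

/-- The Minkowski inner product in the Witt basis. -/
noncomputable def wB (n : ℕ) (u v : Vm n) : ℝ :=
  u 0 * v (lastIx n) + u (lastIx n) * v 0 + ∑ i : Fin n, u (midIx n i) * v (midIx n i)

noncomputable def eMinus (n : ℕ) : Vm n := Pi.single 0 1
noncomputable def ePlus (n : ℕ) : Vm n := Pi.single (lastIx n) 1
noncomputable def eMid (n : ℕ) (i : Fin n) : Vm n := Pi.single (midIx n i) 1

/-- The embedding `ℝⁿ ≃ V₀ ⊆ V`. -/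
noncomputable def vmid (n : ℕ) (c : Fin n → ℝ) : Vm n := ∑ i : Fin n, c i • eMid n i

/-- Membership in `so(1,n+1)`: skew-symmetry with respect to the Minkowski product. -/
def IsSkewB (n : ℕ) (A : Module.End ℝ (Vm n)) : Prop :=
  ∀ u v : Vm n, wB n (A u) v + wB n u (A v) = 0

/-- The element `v̄ ∈ 𝔤₋` associated with `v ∈ ℝⁿ`: `v̄ e₊ = v`, `v̄ eᵢ = -vᵢ e₋`, `v̄ e₋ = 0`. -/
noncomputable def barE (n : ℕ) (v : Fin n → ℝ) : Module.End ℝ (Vm n) :=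
  (LinearMap.proj (lastIx n) : Vm n →ₗ[ℝ] ℝ).smulRight (vmid n v)
    - (∑ i : Fin n, v i • (LinearMap.proj (midIx n i) : Vm n →ₗ[ℝ] ℝ)).smulRight (eMinus n)

/-- The `ℝ`-component of the projection of `X` to `𝔤₀ ≅ ℝ ⊕ so(n)`. -/
noncomputable def piR (n : ℕ) (X : Module.End ℝ (Vm n)) : ℝ :=
  wB n (X (eMinus n)) (ePlus n)

/-- The projection `π₋ : 𝔭 → 𝔤₋ ≅ ℝⁿ`. -/
noncomputable def piMinusE (n : ℕ) (X : Module.End ℝ (Vm n)) : Fin n → ℝ :=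
  fun i => wB n (X (ePlus n)) (eMid n i)

/-- The action of the `𝔤₀ ≅ 𝔠𝔬(n)`-projection `π₀(X)` of `X` on `ℝⁿ`. -/
noncomputable def pi0Act (n : ℕ) (X : Module.End ℝ (Vm n)) (c : Fin n → ℝ) : Fin n → ℝ :=
  fun j => piR n X * c j + ∑ i : Fin n, wB n (X (eMid n i)) (eMid n j) * c i

/-- Membership in the parabolic `𝔭 = stab(ℝ·e₋) ⊆ so(1,n+1)`. -/
def MemP (n : ℕ) (X : Module.End ℝ (Vm n)) : Prop :=
  IsSkewB n X ∧ X (eMinus n) ∈ Submodule.span ℝ {eMinus n}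

attribute [local instance] LieRing.ofAssociativeRing

/-- Indecomposability: no nondegenerate invariant subspace other than `⊥` and `⊤`. -/
def Indecomp (n : ℕ) (h : LieSubalgebra ℝ (Module.End ℝ (Vm n))) : Prop :=
  ∀ W : Submodule ℝ (Vm n),
    (∀ X ∈ h, ∀ w ∈ W, X w ∈ W) →
    (∀ w ∈ W, (∀ w' ∈ W, wB n w w' = 0) → w = 0) →
    W = ⊥ ∨ W = ⊤

-- index facts
lemma lastIx_ne_zero (n : ℕ) : lastIx n ≠ 0 := by
  simp [lastIx, Fin.ext_iff]
lemma midIx_ne_zero (n : ℕ) (i : Fin n) : midIx n i ≠ 0 := by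
  simp [midIx, Fin.ext_iff]
lemma midIx_ne_last (n : ℕ) (i : Fin n) : midIx n i ≠ lastIx n := by
  have := i.2; simp [midIx, lastIx, Fin.ext_iff]; omega
lemma midIx_inj (n : ℕ) {i j : Fin n} (h : midIx n i = midIx n j) : i = j := by
  simp [midIx, Fin.ext_iff] at h ⊢; omega

lemma eMinus_apply_last (n : ℕ) : eMinus n (lastIx n) = 0 := by
  simp [eMinus, Pi.single_apply, lastIx_ne_zero n]
lemma eMinus_apply_mid (n : ℕ) (i : Fin n) : eMinus n (midIx n i) = 0 := by
  simp [eMinus, Pi.single_apply, midIx_ne_zero n i]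
lemma ePlus_apply_last (n : ℕ) : ePlus n (lastIx n) = 1 := by
  simp [ePlus, Pi.single_apply]
lemma ePlus_apply_mid (n : ℕ) (i : Fin n) : ePlus n (midIx n i) = 0 := by
  simp [ePlus, Pi.single_apply, midIx_ne_last n i]
lemma eMid_apply_last (n : ℕ) (i : Fin n) : eMid n i (lastIx n) = 0 := by
  simp [eMid, Pi.single_apply, midIx_ne_last n i]
lemma eMid_apply_mid (n : ℕ) (i j : Fin n) :
    eMid n i (midIx n j) = if j = i then 1 else 0 := by
  simp only [eMid, Pi.single_apply]
  by_cases h : j = i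
  · simp [h]
  · rw [if_neg, if_neg h]; exact fun hh => h (midIx_inj n hh)

lemma vmid_apply_last (n : ℕ) (c : Fin n → ℝ) : vmid n c (lastIx n) = 0 := by
  simp [vmid, Finset.sum_apply, eMid_apply_last]
lemma vmid_apply_mid (n : ℕ) (c : Fin n → ℝ) (j : Fin n) :
    vmid n c (midIx n j) = c j := by
  simp [vmid, Finset.sum_apply, eMid_apply_mid]

lemma barE_apply (n : ℕ) (c : Fin n → ℝ) (u : Vm n) :
    barE n c u = u (lastIx n) • vmid n c - (∑ i : Fin n, c i * u (midIx n i)) • eMinus n := by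
  simp [barE, LinearMap.smulRight_apply, LinearMap.sum_apply, smul_eq_mul]

lemma barE_eMinus (n : ℕ) (c : Fin n → ℝ) : barE n c (eMinus n) = 0 := by
  simp [barE_apply, eMinus_apply_last, eMinus_apply_mid]

lemma barE_ePlus (n : ℕ) (c : Fin n → ℝ) : barE n c (ePlus n) = vmid n c := by
  simp [barE_apply, ePlus_apply_last, ePlus_apply_mid]

lemma barE_eMid (n : ℕ) (c : Fin n → ℝ) (j : Fin n) :
    barE n c (eMid n j) = -(c j) • eMinus n := by
  simp [barE_apply, eMid_apply_last, eMid_apply_mid, mul_ite]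

lemma barE_vmid (n : ℕ) (c w : Fin n → ℝ) :
    barE n c (vmid n w) = -(∑ i : Fin n, c i * w i) • eMinus n := by
  simp [barE_apply, vmid_apply_last, vmid_apply_mid]

lemma barE_bracket (n : ℕ) (c w : Fin n → ℝ) : ⁅barE n c, barE n w⁆ = 0 := by
  rw [LieRing.of_associative_ring_bracket]
  apply sub_eq_zero_of_eq
  refine LinearMap.ext fun u => ?_
  show barE n c (barE n w u) = barE n w (barE n c u)
  rw [barE_apply n w u, barE_apply n c u]
  simp only [map_sub, map_smul, barE_vmid, barE_eMinus, smul_zero, sub_zero]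
  have hcw : ∑ i : Fin n, c i * w i = ∑ i : Fin n, w i * c i :=
    Finset.sum_congr rfl fun i _ => mul_comm _ _
  rw [hcw]

lemma vmid_single (n : ℕ) (i : Fin n) : vmid n (Pi.single i 1) = eMid n i := by
  simp [vmid, Pi.single_apply, ite_smul]

lemma v_decomp (n : ℕ) (v : Vm n) :
    v = v 0 • eMinus n + v (lastIx n) • ePlus n + ∑ i : Fin n, v (midIx n i) • eMid n i := by
  funext j
  simp only [Pi.add_apply, Pi.smul_apply, Finset.sum_apply, smul_eq_mul,
    eMinus, ePlus, eMid, Pi.single_apply]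
  rcases j with ⟨jv, hj⟩
  by_cases h0 : jv = 0
  · subst h0
    have hje : (⟨0, hj⟩ : Fin (n + 2)) = 0 := by simp [Fin.ext_iff]
    have h1 : ∀ i : Fin n, ¬ ((0 : Fin (n + 2)) = midIx n i) := by
      intro i; exact fun hh => midIx_ne_zero n i hh.symm
    simp [hje, Ne.symm (lastIx_ne_zero n), h1]
  · by_cases hl : jv = n + 1
    · subst hl
      have hje : (⟨n + 1, hj⟩ : Fin (n + 2)) = lastIx n := by simp [lastIx, Fin.ext_iff]
      have h1 : ∀ i : Fin n, ¬ (lastIx n = midIx n i) := by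
        intro i; exact fun hh => midIx_ne_last n i hh.symm
      simp [hje, lastIx_ne_zero n, h1]
    · have hjn : jv - 1 < n := by omega
      have hje : (⟨jv, hj⟩ : Fin (n + 2)) = midIx n ⟨jv - 1, hjn⟩ := by
        simp [midIx, Fin.ext_iff]; omega
      have h1 : ∀ i : Fin n, (midIx n (⟨jv - 1, hjn⟩ : Fin n) = midIx n i) ↔ ((⟨jv - 1, hjn⟩ : Fin n) = i) := by
        intro i; exact ⟨midIx_inj n, by rintro rfl; rfl⟩
      simp [hje, midIx_ne_zero n, midIx_ne_last n, h1, mul_ite]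

/-- Let `𝔥 = 𝔤₋ ⊂ so(1,n+1)` and let `R ∈ Λ²V* ⊗ 𝔥` satisfy `𝔥·R = 0`
under the natural action.  Then `e₋ ⌟ R = 0`, i.e. `R(e₋, v) = 0` for all `v ∈ ℝ^{1,n+1}`. -/
theorem stmt15 (n : ℕ) (hn : 1 ≤ n)
    (R : Vm n →ₗ[ℝ] Vm n →ₗ[ℝ] Module.End ℝ (Vm n))
    (hRalt : ∀ u v : Vm n, R u v = - R v u)
    (hval : ∀ u v : Vm n, ∃ w : Fin n → ℝ, R u v = barE n w)
    (hact : ∀ c : Fin n → ℝ, ∀ u v : Vm n,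
      ⁅barE n c, R u v⁆ = R ((barE n c) u) v + R u ((barE n c) v)) :
    ∀ v : Vm n, R (eMinus n) v = 0 := by
  have hself : ∀ u : Vm n, R u u = 0 := by
    intro u
    have h := hRalt u u
    have h2 : R u u + R u u = 0 := by nth_rewrite 2 [h]; exact add_neg_cancel _
    have : (2 : ℝ) • R u u = 0 := by rw [two_smul]; exact h2
    simpa using this
  have hbr0 : ∀ (c : Fin n → ℝ) (u v : Vm n), ⁅barE n c, R u v⁆ = 0 := by
    intro c u v
    obtain ⟨w, hw⟩ := hval u v
    rw [hw, barE_bracket]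
  have h1 : ∀ (c : Fin n → ℝ) (v : Vm n), R (eMinus n) (barE n c v) = 0 := by
    intro c v
    have h := hact c (eMinus n) v
    rw [hbr0, barE_eMinus] at h
    simp only [map_zero, LinearMap.zero_apply, zero_add] at h
    exact h.symm
  have hmid : ∀ i : Fin n, R (eMinus n) (eMid n i) = 0 := by
    intro i
    have := h1 (Pi.single i 1) (ePlus n)
    rwa [barE_ePlus, vmid_single] at this
  have hplus : R (eMinus n) (ePlus n) = 0 := by
    have i0 : Fin n := ⟨0, hn⟩
    have h := hact (Pi.single i0 1) (eMid n i0) (ePlus n)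
    rw [hbr0, barE_ePlus, vmid_single, barE_eMid] at h
    simp only [Pi.single_eq_same, map_smul] at h
    rw [hself (eMid n i0)] at h
    have h' : (-(1:ℝ)) • (R (eMinus n)) (ePlus n) = 0 := by
      rw [← LinearMap.smul_apply] at h
      simpa using h.symm
    simpa using h'
  have hminus : R (eMinus n) (eMinus n) = 0 := hself _
  intro v
  rw [v_decomp n v]
  simp [map_add, map_smul, map_sum, hminus, hplus, hmid]
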